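/- Let N > M ≥ 1 be coprime integers with N + M odd, let a, b ∈ ℂ, and let τ : ℤ → ℂ satisfy τ_m ≠ 0 for all m. Define u_m = (τ_m τ_{m+M+1})/(τ_{m+1} τ_{m+M}). Then τ satisfies the bilinear T-system τ_{m+2M+N} τ_m = a τ_{m+2M} τ_{m+N} + b τ_{m+N+M} τ_{m+M} for all m ∈ ℤ if and only if u satisfies the U-system u_m u_{m+1} ⋯ u_{m+N+M−1} = (b u_{m+M} u_{m+M+1} ⋯ u_{m+N−1} + a)/(u_{m+M} u_{m+M+1} ⋯ u_{m+N−1}) for all m ∈ ℤ. -/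

import Mathlib

theorem tSystem_iff_uSystem_odd_second
    (N M : ℕ) (hM : 1 ≤ M) (hMN : M < N) (hcop : Nat.Coprime N M)
    (hodd : Odd (N + M)) (a b : ℂ)
    (τ : ℤ → ℂ) (hτ : ∀ m : ℤ, τ m ≠ 0)
    (u : ℤ → ℂ)
    (hu : ∀ m : ℤ, u m = τ m * τ (m + M + 1) / (τ (m + 1) * τ (m + M))) :
    (∀ m : ℤ, τ (m + 2 * M + N) * τ m =
        a * (τ (m + 2 * M) * τ (m + N)) + b * (τ (m + N + M) * τ (m + M))) ↔
    (∀ m : ℤ, ∏ i ∈ Finset.range (N + M), u (m + i) =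
        (b * ∏ i ∈ Finset.range (N - M), u (m + M + i) + a) /
          ∏ i ∈ Finset.range (N - M), u (m + M + i)) := by
  have key : ∀ (m : ℤ) (k : ℕ), ∏ i ∈ Finset.range k, u (m + i) =
      τ m * τ (m + M + k) / (τ (m + k) * τ (m + M)) := by
    intro m k
    induction k with
    | zero => simp [div_self, mul_ne_zero (hτ m) (hτ (m + M))]
    | succ k ih =>
      rw [Finset.prod_range_succ, ih, hu]
      push_cast
      field_simp [hτ]
      ring
  constructor
  · intro h m
    have hm := h m
    rw [key, key]
    have e1 : (m : ℤ) + M + (N + M : ℕ) = m + 2 * M + N := by push_cast; ring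
    have e2 : (m : ℤ) + ((N + M : ℕ) : ℤ) = m + N + M := by push_cast; ring
    have e3 : (m : ℤ) + M + M + ((N - M : ℕ) : ℤ) = m + N + M := by
      have : ((N - M : ℕ) : ℤ) = (N : ℤ) - M := by
        omega
      rw [this]; ring
    have e4 : (m : ℤ) + M + ((N - M : ℕ) : ℤ) = m + N := by
      have : ((N - M : ℕ) : ℤ) = (N : ℤ) - M := by omega
      rw [this]; ring
    have e5 : (m : ℤ) + M + M = m + 2 * M := by ring
    rw [e1, e2, e3, e4, e5]
    field_simp [hτ]
    linear_combination hm
  · intro h m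
    have hm := h m
    rw [key, key] at hm
    have e1 : (m : ℤ) + M + (N + M : ℕ) = m + 2 * M + N := by push_cast; ring
    have e2 : (m : ℤ) + ((N + M : ℕ) : ℤ) = m + N + M := by push_cast; ring
    have e3 : (m : ℤ) + M + M + ((N - M : ℕ) : ℤ) = m + N + M := by
      have : ((N - M : ℕ) : ℤ) = (N : ℤ) - M := by omega
      rw [this]; ring
    have e4 : (m : ℤ) + M + ((N - M : ℕ) : ℤ) = m + N := by
      have : ((N - M : ℕ) : ℤ) = (N : ℤ) - M := by omega
      rw [this]; ring
    have e5 : (m : ℤ) + M + M = m + 2 * M := by ring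
    rw [e1, e2, e3, e4, e5] at hm
    field_simp [hτ] at hm
    have hC : τ (m + (M : ℤ)) * τ (m + N + M) ≠ 0 := mul_ne_zero (hτ _) (hτ _)
    refine mul_right_cancel₀ hC ?_
    linear_combination (τ (m + M) * τ (m + N + M)) * hm
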